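/- Let φₙ ∈ Homeo_bd(Yₙ) with r(φₙ) ≥ n/f(n) for infinitely many n. Then there exists g ∈ D_f such that g − ψ(g) ∉ C_0(X,A), where ψ is the automorphism of C_b(X,A) canonically determined by {φₙ}; i.e., the induced automorphism of the quotient moves some element of C_f. -/

import Mathlib

open Filter

/-- The subalgebra `D_f(X, A, Yₙ)` of `C_b(X, A)`. -/
def Df {X : Type*} [MetricSpace X] {A : Type*} [NonUnitalNormedRing A]
    (Y : ℕ → Set X) (f : ℕ → ℕ) : Set (BoundedContinuousFunction X A) :=
  {g | ∀ ε > 0, ∀ᶠ n in atTop, ∀ x ∈ Y n, ∀ y ∈ Y n,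
      dist x y < 1 / (f n : ℝ) → ‖g x - g y‖ < ε}

private lemma abs_min_one_sub_min_one_le (s t : ℝ) :
    |min 1 s - min 1 t| ≤ |s - t| := by
  have h1 : s - t ≤ |s - t| := le_abs_self _
  have h2 : t - s ≤ |s - t| := by rw [abs_sub_comm]; exact le_abs_self _
  rcases le_total s 1 with hs | hs <;> rcases le_total t 1 with ht | ht
  · rw [min_eq_right hs, min_eq_right ht]
  · rw [min_eq_right hs, min_eq_left ht, abs_le]; constructor <;> linarith
  · rw [min_eq_left hs, min_eq_right ht, abs_le]; constructor <;> linarith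
  · rw [min_eq_left hs, min_eq_left ht]; simp [abs_nonneg]

set_option maxHeartbeats 2000000 in
/-- Let `Φ` be the homeomorphism of `X` canonically extending boundary-fixing
homeomorphisms `φₙ` of the `Yₙ` (identity off `⋃ Yₙ`), and `ψ(g) = g ∘ Φ`. If
`r(φₙ) ≥ n / f n` for infinitely many `n`, then there is `g ∈ D_f` with `g - ψ(g)` not
vanishing at infinity; i.e. the induced automorphism of the quotient moves some element
of `C_f`. -/
theorem large_radius_moves_Cf {X : Type*} [MetricSpace X] [LocallyCompactSpace X]
    [PolishSpace X] [NoncompactSpace X]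
    {A : Type*} [NonUnitalNormedRing A] [StarRing A] [CStarRing A] [NormedSpace ℂ A]
    [IsScalarTower ℂ A A] [SMulCommClass ℂ A A] [StarModule ℂ A] [NormedStarGroup A]
    [CompleteSpace A] [Nontrivial A]
    (Y : ℕ → Set X) (hYc : ∀ n, IsCompact (Y n)) (hYi : ∀ n, (Y n).Infinite)
    (hYd : Pairwise fun i j => Disjoint (Y i) (Y j))
    (hYf : ∀ K : Set X, IsCompact K → {n | (K ∩ Y n).Nonempty}.Finite)
    (Φ : X ≃ₜ X)
    (hΦoff : ∀ x, x ∉ ⋃ n, Y n → Φ x = x)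
    (hΦmaps : ∀ n, Φ '' Y n = Y n)
    (hΦbd : ∀ n, ∀ x ∈ Y n, x ∈ closure (Y n)ᶜ → Φ x = x)
    (f : ℕ → ℕ) (hf : ∀ n, 0 < f n)
    (hlarge : ∃ᶠ n : ℕ in atTop, (n : ℝ) / f n ≤ ⨆ x : Y n, dist (x : X) (Φ x)) :
    ∃ g ∈ Df (A := A) Y f,
      ¬ Tendsto (fun x => g x - g (Φ x)) (cocompact X) (nhds 0) := by
  classical
  obtain ⟨b0, hb0⟩ := exists_ne (0 : A)
  set a : A := ((‖b0‖⁻¹ : ℝ) : ℂ) • b0 with ha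
  have hna : ‖a‖ = 1 := by
    rw [ha, norm_smul, Complex.norm_real, Real.norm_eq_abs,
      abs_of_nonneg (inv_nonneg.2 (norm_nonneg _)),
      inv_mul_cancel₀ (norm_ne_zero_iff.2 hb0)]
  set C : CompactExhaustion X := CompactExhaustion.choice X with hC
  -- the key step of the recursion
  have step : ∀ N i₀ : ℕ, ∃ n i : ℕ, ∃ p : X, ∃ δ : ℝ,
      N < n ∧ i₀ < i ∧ p ∈ Y n ∧ 0 < δ ∧ (n : ℝ) / f n ≤ dist p (Φ p) ∧
      (∀ x, Metric.infDist x (Y n) ≤ δ → x ∈ C i) ∧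
      (∀ x, Metric.infDist x (Y n) ≤ δ → x ∉ C i₀) ∧
      (∀ m, m ≠ n → ∀ x ∈ Y m, ¬ Metric.infDist x (Y n) ≤ δ) := by
    intro N i₀
    obtain ⟨M, hM⟩ := (hYf (C i₀) (C.isCompact i₀)).bddAbove
    obtain ⟨n, hnN, hn⟩ := frequently_atTop.mp hlarge (max (N + 1) (M + 1))
    have hnN' : N < n := lt_of_lt_of_le (Nat.lt_succ_self N) ((le_max_left _ _).trans hnN)
    have hnM : M < n := lt_of_lt_of_le (Nat.lt_succ_self M) ((le_max_right _ _).trans hnN)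
    have hYC : ∀ x ∈ Y n, x ∉ C i₀ := by
      intro x hx hxC
      exact absurd (hM (⟨x, hxC, hx⟩ : (C i₀ ∩ Y n).Nonempty)) (not_le.2 hnM)
    have hne : (Y n).Nonempty := (hYi n).nonempty
    have hnty : Nonempty (Y n) := hne.to_subtype
    obtain ⟨p, hp, hpmax⟩ := (hYc n).exists_isMaxOn hne
      ((continuous_id.dist Φ.continuous).continuousOn)
    have hmove : (n : ℝ) / f n ≤ dist p (Φ p) :=
      hn.trans (ciSup_le fun x => hpmax x.2)
    obtain ⟨K, hKc, hKint⟩ := exists_compact_superset (hYc n)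
    set T : Set ℕ := {m | (K ∩ Y m).Nonempty} \ {n} with hT
    have hTfin : T.Finite := (hYf K hKc).subset Set.diff_subset
    have hZc : IsClosed (⋃ m ∈ T, Y m) :=
      hTfin.isClosed_biUnion fun m _ => (hYc m).isClosed
    set U : Set X := interior K ∩ (C i₀)ᶜ ∩ (⋃ m ∈ T, Y m)ᶜ with hU
    have hUo : IsOpen U :=
      ((isOpen_interior.inter (C.isCompact i₀).isClosed.isOpen_compl).inter hZc.isOpen_compl)
    have hYU : Y n ⊆ U := by
      intro x hx
      refine ⟨⟨hKint hx, hYC x hx⟩, ?_⟩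
      simp only [Set.mem_compl_iff, Set.mem_iUnion]
      rintro ⟨m, hm, hxm⟩
      exact Set.disjoint_left.mp (hYd hm.2) hxm hx
    obtain ⟨δ, hδpos, hδ⟩ := (hYc n).exists_cthickening_subset_open hUo hYU
    have hsupp : ∀ x : X, Metric.infDist x (Y n) ≤ δ → x ∈ U := by
      intro x hx
      obtain ⟨y, hy, hxy⟩ := (hYc n).exists_infDist_eq_dist hne x
      exact hδ (Metric.mem_cthickening_of_dist_le x y δ _ hy (by rw [← hxy]; exact hx))
    obtain ⟨i1, hi1⟩ := C.exists_superset_of_isCompact hKc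
    refine ⟨n, max i1 (i₀ + 1), p, δ, hnN', lt_of_lt_of_le (Nat.lt_succ_self i₀)
      (le_max_right _ _), hp, hδpos, hmove, ?_, ?_, ?_⟩
    · intro x hx
      exact C.subset (le_max_left _ _) (hi1 (interior_subset (hsupp x hx).1.1))
    · intro x hx
      exact (hsupp x hx).1.2
    · intro m hmn x hxm hx
      have hxU := hsupp x hx
      have hmT : m ∈ T := ⟨⟨x, interior_subset hxU.1.1, hxm⟩, hmn⟩
      exact hxU.2 (Set.mem_biUnion hmT hxm)
  choose sn si sp sδ hs1 hs2 hs3 hs4 hs5 hs6 hs7 hs8 using step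
  -- the recursively defined sequence of bumps
  let arg : ℕ → ℕ × ℕ := fun k => Nat.rec (0, 0) (fun _ q => (sn q.1 q.2, si q.1 q.2)) k
  let nn : ℕ → ℕ := fun k => sn (arg k).1 (arg k).2
  let ii : ℕ → ℕ := fun k => si (arg k).1 (arg k).2
  let pp : ℕ → X := fun k => sp (arg k).1 (arg k).2
  let dd : ℕ → ℝ := fun k => sδ (arg k).1 (arg k).2
  have harg : ∀ k, arg (k + 1) = (nn k, ii k) := fun k => rfl
  have hnlt : ∀ k, nn k < nn (k + 1) := fun k => hs1 (nn k) (ii k)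
  have hilt : ∀ k, ii k < ii (k + 1) := fun k => hs2 (nn k) (ii k)
  have nmono : StrictMono nn := strictMono_nat_of_lt_succ hnlt
  have imono : StrictMono ii := strictMono_nat_of_lt_succ hilt
  have hpY : ∀ k, pp k ∈ Y (nn k) := fun k => hs3 (arg k).1 (arg k).2
  have hdpos : ∀ k, 0 < dd k := fun k => hs4 (arg k).1 (arg k).2
  have hmove : ∀ k, (nn k : ℝ) / f (nn k) ≤ dist (pp k) (Φ (pp k)) :=
    fun k => hs5 (arg k).1 (arg k).2
  have hsubC : ∀ k x, Metric.infDist x (Y (nn k)) ≤ dd k → x ∈ C (ii k) :=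
    fun k => hs6 (arg k).1 (arg k).2
  have hnotC : ∀ k x, Metric.infDist x (Y (nn (k + 1))) ≤ dd (k + 1) → x ∉ C (ii k) :=
    fun k => hs7 (arg (k + 1)).1 (arg (k + 1)).2
  have hdisj : ∀ k m, m ≠ nn k → ∀ x ∈ Y m, ¬ Metric.infDist x (Y (nn k)) ≤ dd k :=
    fun k => hs8 (arg k).1 (arg k).2
  have hn0 : ∀ k, 0 < nn k := fun k => Nat.lt_of_le_of_lt (Nat.zero_le _) (hs1 (arg k).1 (arg k).2)

  -- the bump functions
  let cst : ℕ → ℝ := fun k => (f (nn k) : ℝ) / (nn k)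
  have hcstpos : ∀ k, 0 < cst k := fun k =>
    div_pos (by exact_mod_cast hf (nn k)) (by exact_mod_cast hn0 k)
  let bump : ℕ → X → ℝ := fun k x =>
    max 0 (1 - Metric.infDist x (Y (nn k)) / dd k) * min 1 (cst k * dist x (pp k))
  have bcont : ∀ k, Continuous (bump k) := fun k =>
    ((continuous_const.max (continuous_const.sub
        ((Metric.continuous_infDist_pt _).div_const _))).mul
      (continuous_const.min (continuous_const.mul (continuous_id.dist continuous_const))))
  have bnonneg : ∀ k x, 0 ≤ bump k x := fun k x =>
    mul_nonneg (le_max_left _ _)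
      (le_min zero_le_one (mul_nonneg (hcstpos k).le dist_nonneg))
  have ble_one : ∀ k x, bump k x ≤ 1 := by
    intro k x
    have h1 : max 0 (1 - Metric.infDist x (Y (nn k)) / dd k) ≤ 1 := by
      apply max_le zero_le_one
      have : 0 ≤ Metric.infDist x (Y (nn k)) / dd k :=
        div_nonneg Metric.infDist_nonneg (hdpos k).le
      linarith
    calc bump k x ≤ 1 * min 1 (cst k * dist x (pp k)) := by
          apply mul_le_mul_of_nonneg_right h1
            (le_min zero_le_one (mul_nonneg (hcstpos k).le dist_nonneg))
      _ ≤ 1 := by rw [one_mul]; exact min_le_left _ _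
  have bsupport : ∀ k x, bump k x ≠ 0 → Metric.infDist x (Y (nn k)) ≤ dd k := by
    intro k x h
    by_contra hgt
    push_neg at hgt
    have h2 : 1 < Metric.infDist x (Y (nn k)) / dd k := (one_lt_div (hdpos k)).mpr hgt
    have hmax : (0 : ℝ) ⊔ (1 - Metric.infDist x (Y (nn k)) / dd k) = 0 :=
      max_eq_left (by linarith)
    exact h (mul_eq_zero_of_left hmax _)
  have bonY : ∀ k x, x ∈ Y (nn k) → bump k x = min 1 (cst k * dist x (pp k)) := by
    intro k x hx
    have : Metric.infDist x (Y (nn k)) = 0 := Metric.infDist_zero_of_mem hx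
    simp only [bump, this, zero_div, sub_zero, max_eq_right zero_le_one, one_mul]
  -- vanishing of later bumps on earlier exhaustion sets
  have hvanish : ∀ k j x, k < j → x ∈ C (ii k) → bump j x = 0 := by
    intro k j x hkj hxC
    by_contra hne0
    obtain ⟨t, rfl⟩ := Nat.exists_eq_add_of_lt hkj
    have h1 := bsupport (k + t + 1) x hne0
    have h2 : x ∈ C (ii (k + t)) := C.subset (imono.monotone (Nat.le_add_right k t)) hxC
    exact hnotC (k + t) x h1 h2
  have honce : ∀ x j j', j < j' → bump j x ≠ 0 → bump j' x = 0 := fun x j j' h hj =>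
    hvanish j j' x h (hsubC j x (bsupport j x hj))
  -- the scalar function
  let hh : X → ℝ := fun x => ∑' k, bump k x
  have hsum_eq : ∀ k x, x ∈ C (ii k) → hh x = ∑ j ∈ Finset.range (k + 1), bump j x := by
    intro k x hx
    refine tsum_eq_sum fun j hj => hvanish k j x ?_ hx
    exact Nat.lt_of_succ_le (le_of_not_gt fun h => hj (Finset.mem_range.mpr h))
  have hmem : ∀ x : X, ∃ k, x ∈ C (ii k) := by
    intro x
    exact ⟨C.find x, C.subset (imono.le_apply) (C.mem_find x)⟩
  -- at most one bump is nonzero, and the value formula on each Y m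
  have hsingle : ∀ k x, x ∈ Y (nn k) → hh x = bump k x := by
    intro k x hx
    refine tsum_eq_single k fun j hj => ?_
    have : nn k ≠ nn j := fun h => hj (nmono.injective h).symm
    have := hdisj j (nn k) this x hx
    by_contra hb
    exact this (bsupport j x hb)
  have hzeroY : ∀ m, (∀ k, m ≠ nn k) → ∀ x ∈ Y m, hh x = 0 := by
    intro m hm x hx
    have : ∀ j, bump j x = 0 := by
      intro j
      by_contra hb
      exact hdisj j m (hm j) x hx (bsupport j x hb)
    simp only [hh]
    rw [tsum_eq_single 0 fun j _ => this j, this 0]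
  -- bounds for hh
  have hh01 : ∀ x, 0 ≤ hh x ∧ hh x ≤ 1 := by
    intro x
    obtain ⟨k, hk⟩ := hmem x
    rw [hsum_eq k x hk]
    constructor
    · exact Finset.sum_nonneg fun j _ => bnonneg j x
    · by_cases hz : ∀ j ∈ Finset.range (k + 1), bump j x = 0
      · rw [Finset.sum_eq_zero hz]; exact zero_le_one
      · push_neg at hz
        obtain ⟨j₀, hj₀m, hj₀⟩ := hz
        rw [Finset.sum_eq_single_of_mem j₀ hj₀m ?_]
        · exact ble_one j₀ x
        · intro j _ hne
          rcases lt_or_gt_of_ne hne with h | h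
          · by_contra hb
            exact hj₀ (honce x j j₀ h hb)
          · exact honce x j₀ j h hj₀
  -- continuity of hh
  have hcont : Continuous hh := by
    rw [continuous_iff_continuousAt]
    intro x
    obtain ⟨m, hm⟩ := C.exists_mem x
    have hx' : x ∈ interior (C (m + 1)) := C.subset_interior_succ m hm
    have hsub : interior (C (m + 1)) ⊆ C (ii (m + 1)) :=
      interior_subset.trans (C.subset imono.le_apply)
    have heq : ∀ y ∈ interior (C (m + 1)),
        hh y = ∑ j ∈ Finset.range (m + 2), bump j y :=
      fun y hy => hsum_eq (m + 1) y (hsub hy)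
    have hfin : Continuous fun y => ∑ j ∈ Finset.range (m + 2), bump j y :=
      continuous_finset_sum _ fun j _ => bcont j
    refine hfin.continuousAt.congr ?_
    filter_upwards [isOpen_interior.mem_nhds hx'] with y hy
    exact (heq y hy).symm
  -- the element g of C_b(X, A)
  let g : BoundedContinuousFunction X A :=
    BoundedContinuousFunction.ofNormedAddCommGroup (fun x => ((hh x : ℝ) : ℂ) • a)
      ((Complex.continuous_ofReal.comp hcont).smul continuous_const) 1
      (fun x => by
        rw [norm_smul, hna, mul_one, Complex.norm_real, Real.norm_eq_abs]
        exact abs_le.2 ⟨by linarith [(hh01 x).1], (hh01 x).2⟩)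
  have hgval : ∀ x : X, g x = ((hh x : ℝ) : ℂ) • a := fun x => rfl
  have hgdiff : ∀ x y : X, ‖g x - g y‖ = |hh x - hh y| := by
    intro x y
    rw [hgval, hgval, ← sub_smul, norm_smul, hna, mul_one, ← Complex.ofReal_sub,
      Complex.norm_real, Real.norm_eq_abs]
  refine ⟨g, ?_, ?_⟩
  · -- g ∈ Df
    intro ε hε
    obtain ⟨N, hN⟩ := exists_nat_gt (1 / ε)
    rw [eventually_atTop]
    refine ⟨N + 1, fun m hm x hx y hy hxy => ?_⟩
    have hm1 : (1 : ℝ) ≤ m := by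
      have : 1 ≤ m := le_trans (Nat.le_add_left 1 N) hm
      exact_mod_cast this
    have hmeps : 1 / (m : ℝ) < ε := by
      rw [div_lt_iff₀ (by linarith : (0:ℝ) < m)]
      have hNm : (N : ℝ) < m := by
        have : N < m := lt_of_lt_of_le (Nat.lt_succ_self N) hm
        exact_mod_cast this
      have hNε : 1 < ε * N ∨ (N:ℝ) ≤ 1/ε := by
        left
        rw [mul_comm, ← div_lt_iff₀ hε]
        exact hN
      rcases hNε with h | h
      · calc (1:ℝ) < ε * N := h
          _ ≤ ε * m := by nlinarith
      · nlinarith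
    rw [hgdiff]
    by_cases hcase : ∃ k, m = nn k
    · obtain ⟨k, rfl⟩ := hcase
      rw [hsingle k x hx, hsingle k y hy, bonY k x hx, bonY k y hy]
      have lip := abs_min_one_sub_min_one_le (cst k * dist x (pp k)) (cst k * dist y (pp k))
      have h2 : |cst k * dist x (pp k) - cst k * dist y (pp k)|
          = cst k * |dist x (pp k) - dist y (pp k)| := by
        rw [← mul_sub, abs_mul, abs_of_pos (hcstpos k)]
      have h3 : |dist x (pp k) - dist y (pp k)| ≤ dist x y := abs_dist_sub_le x y (pp k)
      have h4 : cst k * dist x y < cst k * (1 / f (nn k)) := by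
        apply mul_lt_mul_of_pos_left hxy (hcstpos k)
      have h5 : cst k * (1 / f (nn k)) = 1 / (nn k) := by
        have hfpos : (0:ℝ) < f (nn k) := by exact_mod_cast hf (nn k)
        have hnpos : (0:ℝ) < nn k := by exact_mod_cast hn0 k
        field_simp [cst]
        simp only [cst]; field_simp
      calc |min 1 (cst k * dist x (pp k)) - min 1 (cst k * dist y (pp k))|
          ≤ |cst k * dist x (pp k) - cst k * dist y (pp k)| := lip
        _ = cst k * |dist x (pp k) - dist y (pp k)| := h2
        _ ≤ cst k * dist x y := by
            exact mul_le_mul_of_nonneg_left h3 (hcstpos k).le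
        _ < cst k * (1 / f (nn k)) := h4
        _ = 1 / (nn k) := h5
        _ < ε := hmeps
    · push_neg at hcase
      rw [hzeroY m hcase x hx, hzeroY m hcase y hy]
      simpa using hε
  · -- the difference does not vanish at infinity
    intro hT
    have h2 := Metric.tendsto_nhds.mp hT (1 / 2) (by norm_num)
    rw [hasBasis_cocompact.eventually_iff] at h2
    obtain ⟨K, hKc, hK⟩ := h2
    obtain ⟨M, hM⟩ := (hYf K hKc).bddAbove
    set k := M + 1 with hkdef
    have hnk : M < nn k := lt_of_lt_of_le (Nat.lt_succ_self M) nmono.le_apply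
    have hpK : pp k ∉ K := by
      intro hmem'
      exact absurd (hM (⟨pp k, hmem', hpY k⟩ : (K ∩ Y (nn k)).Nonempty)) (not_le.2 hnk)
    have hball := hK (by exact hpK : pp k ∈ Kᶜ)
    rw [dist_zero_right] at hball
    have hΦp : Φ (pp k) ∈ Y (nn k) := by
      rw [← hΦmaps (nn k)]; exact ⟨pp k, hpY k, rfl⟩
    have hv0 : hh (pp k) = 0 := by
      rw [hsingle k _ (hpY k), bonY k _ (hpY k)]
      simp
    have hv1 : hh (Φ (pp k)) = 1 := by
      rw [hsingle k _ hΦp, bonY k _ hΦp]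
      have hd : (nn k : ℝ) / f (nn k) ≤ dist (Φ (pp k)) (pp k) := by
        rw [dist_comm]; exact hmove k
      have h1le : 1 ≤ cst k * dist (Φ (pp k)) (pp k) := by
        have hfpos : (0:ℝ) < f (nn k) := by exact_mod_cast hf (nn k)
        have hnpos : (0:ℝ) < nn k := by exact_mod_cast hn0 k
        have := mul_le_mul_of_nonneg_left hd (hcstpos k).le
        calc (1:ℝ) = cst k * ((nn k : ℝ) / f (nn k)) := by field_simp [cst]; simp only [cst]; field_simp
          _ ≤ cst k * dist (Φ (pp k)) (pp k) := this
      exact min_eq_left h1le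
    rw [hgdiff, hv0, hv1] at hball
    norm_num at hball
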